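/- arXiv:2512.24587 — 2 statements merged into one kernel-verified Lean document; each statement's English description precedes it below -/
import Mathlib

section
/- (Empirical process bound for the bumped empirical risk.) Under the stated conditions (i.i.d. datapoints and bounded costs), for each j ∈ {1,…,m}, each n ≥ 2, and every fixed λ_{1:(j−1)} ∈ ℝ^{j−1}, with probability at least 1 − 2/√n one has sup over λ_j ∈ ℝ of |g_j^+(λ_j; λ_{1:(j−1)}) − g_j^*(λ_j; λ_{1:(j−1)})| ≤ (16√2 + 2)·Vmax_j·√(log n / n). -/
open MeasureTheory Set

attribute [local instance] Classical.propDecidable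

noncomputable section

/-- The loss `L_j^{(i)}(λ_{1:j}) = V_j^{(i)} · 1{S_1^{(i)} ≤ λ_1, …, S_{j−1}^{(i)} ≤ λ_{j−1},
S_j^{(i)} > λ_j}`.  Only the coordinates `ℓ ≤ j` of the vector `lam` are read. -/
def lossFn {Ω : Type*} {m n : ℕ} (S V : Fin (n + 1) → Fin m → Ω → ℝ)
    (j : Fin m) (i : Fin (n + 1)) (lam : Fin m → ℝ) (ω : Ω) : ℝ :=
  V i j ω * (if (∀ l, l < j → S i l ω ≤ lam l) ∧ lam j < S i j ω then 1 else 0)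

/-- The population risk `g_j^*(λ_j; λ_{1:(j−1)}) = E[L_j^{(n+1)}(λ_{1:j})]`, the expectation being
taken at the test datapoint `i = n+1`. -/
def gStar {Ω : Type*} [MeasurableSpace Ω] {m n : ℕ} (μ : Measure Ω)
    (S V : Fin (n + 1) → Fin m → Ω → ℝ) (j : Fin m) (lam : Fin m → ℝ) : ℝ :=
  ∫ ω, lossFn S V j (Fin.last n) lam ω ∂μ

/-- `U_j^*(λ_{1:(j−1)}; b) = sup{x ∈ Λ_j : g_j^*(x; λ_{1:(j−1)}) > b}`, the supremum of the empty
set being `λ_j^min` (implemented by inserting `λ_j^min` into the set, which does not change the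
supremum of a nonempty subset of `Λ_j`). -/
def UStar {Ω : Type*} [MeasurableSpace Ω] {m n : ℕ} (μ : Measure Ω)
    (S V : Fin (n + 1) → Fin m → Ω → ℝ) (lamMin lamMax : Fin m → ℝ)
    (j : Fin m) (lam : Fin m → ℝ) (b : ℝ) : ℝ :=
  sSup (insert (lamMin j)
    {x | x ∈ Icc (lamMin j) (lamMax j) ∧ b < gStar μ S V j (Function.update lam j x)})

/-- The bumped empirical risk `g_j^+(λ_j; λ_{1:(j−1)})`. -/
def gPlus {Ω : Type*} {m n : ℕ} (S V : Fin (n + 1) → Fin m → Ω → ℝ) (Vmax : Fin m → ℝ)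
    (j : Fin m) (lam : Fin m → ℝ) (ω : Ω) : ℝ :=
  (1 / ((n : ℝ) + 1)) * ∑ i : Fin n, lossFn S V j i.castSucc lam ω + Vmax j / ((n : ℝ) + 1)

namespace EPB

open ProbabilityTheory Real

variable {Ω : Type*} [MeasurableSpace Ω] {μ : Measure Ω} [IsProbabilityMeasure μ]

lemma integrable_of_bdd {f : Ω → ℝ} (hf : AEStronglyMeasurable f μ) {C : ℝ}
    (h : ∀ᵐ ω ∂μ, |f ω| ≤ C) : Integrable f μ :=
  Integrable.mono' (integrable_const C) hf (by simpa [Real.norm_eq_abs] using h)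

lemma mgf_le_of_bounded {Y : Ω → ℝ} (hY : Measurable Y) {c t : ℝ} (hc : 0 ≤ c) (ht : 0 ≤ t)
    (htc : t * c ≤ 1) (hbd : ∀ᵐ ω ∂μ, |Y ω| ≤ c) (hmean : ∫ ω, Y ω ∂μ = 0) :
    mgf Y μ t ≤ Real.exp (t ^ 2 * c ^ 2) := by
  have hYint : Integrable Y μ := integrable_of_bdd hY.aestronglyMeasurable hbd
  have hint_exp : Integrable (fun ω => Real.exp (t * Y ω)) μ := by
    refine integrable_of_bdd (C := Real.exp (t * c)) ((hY.const_mul t).exp).aestronglyMeasurable ?_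
    filter_upwards [hbd] with ω h
    rw [abs_of_pos (Real.exp_pos _)]
    exact Real.exp_le_exp.2 (mul_le_mul_of_nonneg_left (le_trans (le_abs_self _) h) ht)
  have hpt : ∀ᵐ ω ∂μ, Real.exp (t * Y ω) ≤ 1 + t * Y ω + t ^ 2 * c ^ 2 := by
    filter_upwards [hbd] with ω h
    have habs : |t * Y ω| ≤ 1 := by
      rw [abs_mul, abs_of_nonneg ht]
      exact le_trans (mul_le_mul_of_nonneg_left h ht) htc
    have := Real.abs_exp_sub_one_sub_id_le habs
    have h2 : (t * Y ω) ^ 2 ≤ t ^ 2 * c ^ 2 := by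
      rw [mul_pow]
      have := sq_abs (Y ω) ▸ pow_le_pow_left₀ (abs_nonneg _) h 2
      nlinarith [sq_nonneg t]
    nlinarith [abs_le.1 this]
  have hint_rhs : Integrable (fun ω => 1 + t * Y ω + t ^ 2 * c ^ 2) μ := by
    exact ((integrable_const 1).add (hYint.const_mul t)).add (integrable_const _)
  calc mgf Y μ t = ∫ ω, Real.exp (t * Y ω) ∂μ := rfl
    _ ≤ ∫ ω, (1 + t * Y ω + t ^ 2 * c ^ 2) ∂μ := integral_mono_ae hint_exp hint_rhs hpt
    _ = 1 + t ^ 2 * c ^ 2 := by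
        have h1 : (fun ω => 1 + t * Y ω + t ^ 2 * c ^ 2)
            = fun ω => (1 + t ^ 2 * c ^ 2) + t * Y ω := by funext ω; ring
        rw [h1, integral_add (integrable_const _) (hYint.const_mul t),
          integral_const, integral_const_mul, hmean]
        simp
    _ ≤ Real.exp (t ^ 2 * c ^ 2) := by
        have := Real.add_one_le_exp (t ^ 2 * c ^ 2); linarith


lemma chernoff_sum {ι : Type*} {Y : ι → Ω → ℝ} (hmeas : ∀ i, Measurable (Y i))
    (hindep : iIndepFun Y μ) (s : Finset ι) {c : ℝ} (hc : 0 < c)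
    (hbd : ∀ i ∈ s, ∀ᵐ ω ∂μ, |Y i ω| ≤ c) (hmean : ∀ i ∈ s, ∫ ω, Y i ω ∂μ = 0)
    {ε : ℝ} (hε : 0 ≤ ε) :
    (μ {ω | (s.card : ℝ) * ε ≤ ∑ i ∈ s, Y i ω}).toReal
      ≤ Real.exp (-(s.card : ℝ) * ε ^ 2 / (4 * c ^ 2)) := by
  have hballs : ∀ᵐ ω ∂μ, ∀ i ∈ s, |Y i ω| ≤ c := (ae_ball_iff s.countable_toSet).2 hbd
  by_cases hε2 : ε ≤ 2 * c
  · -- main Chernoff case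
    set t : ℝ := ε / (2 * c ^ 2) with ht_def
    have ht : 0 ≤ t := div_nonneg hε (by positivity)
    have htc : t * c ≤ 1 := by
      rw [ht_def, div_mul_eq_mul_div, div_le_one (by positivity)]
      nlinarith
    have hint : Integrable (fun ω => Real.exp (t * ∑ i ∈ s, Y i ω)) μ := by
      refine integrable_of_bdd (C := Real.exp (t * (s.card * c)))
        ((Finset.measurable_sum s fun i _ => hmeas i).const_mul t).exp.aestronglyMeasurable ?_
      filter_upwards [hballs] with ω h
      rw [abs_of_pos (Real.exp_pos _)]
      refine Real.exp_le_exp.2 (mul_le_mul_of_nonneg_left ?_ ht)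
      calc ∑ i ∈ s, Y i ω ≤ ∑ i ∈ s, c := Finset.sum_le_sum fun i hi => le_trans (le_abs_self _) (h i hi)
        _ = s.card * c := by rw [Finset.sum_const, nsmul_eq_mul]
    have hch := measure_ge_le_exp_mul_mgf (X := fun ω => ∑ i ∈ s, Y i ω) (μ := μ)
      ((s.card : ℝ) * ε) ht hint
    have hsum_eq : (fun ω => ∑ i ∈ s, Y i ω) = ∑ i ∈ s, Y i := by
      funext ω; simp [Finset.sum_apply]
    have hmgf : mgf (fun ω => ∑ i ∈ s, Y i ω) μ t = ∏ i ∈ s, mgf (Y i) μ t := by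
      rw [hsum_eq]; exact hindep.mgf_sum hmeas s
    have hprod : ∏ i ∈ s, mgf (Y i) μ t ≤ Real.exp ((s.card : ℝ) * (t ^ 2 * c ^ 2)) := by
      calc ∏ i ∈ s, mgf (Y i) μ t ≤ ∏ i ∈ s, Real.exp (t ^ 2 * c ^ 2) := by
            refine Finset.prod_le_prod (fun i _ => mgf_nonneg) (fun i hi =>
              mgf_le_of_bounded (hmeas i) hc.le ht htc (hbd i hi) (hmean i hi))
        _ = Real.exp ((s.card : ℝ) * (t ^ 2 * c ^ 2)) := by
            rw [Finset.prod_const, ← Real.exp_nat_mul]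
    calc (μ {ω | (s.card : ℝ) * ε ≤ ∑ i ∈ s, Y i ω}).toReal
        ≤ Real.exp (-t * ((s.card : ℝ) * ε)) * mgf (fun ω => ∑ i ∈ s, Y i ω) μ t := hch
      _ ≤ Real.exp (-t * ((s.card : ℝ) * ε)) * Real.exp ((s.card : ℝ) * (t ^ 2 * c ^ 2)) := by
          exact mul_le_mul_of_nonneg_left (hmgf ▸ hprod) (Real.exp_pos _).le
      _ = Real.exp (-t * ((s.card : ℝ) * ε) + (s.card : ℝ) * (t ^ 2 * c ^ 2)) := by
          rw [← Real.exp_add]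
      _ = Real.exp (-(s.card : ℝ) * ε ^ 2 / (4 * c ^ 2)) := by
          congr 1
          rw [ht_def]
          field_simp
          ring
  · -- large deviation: event is null (or s empty)
    push_neg at hε2
    rcases Finset.eq_empty_or_nonempty s with rfl | hs
    · simp
    · have hcard : (1 : ℝ) ≤ s.card := by exact_mod_cast Finset.card_pos.2 hs
      have hnull : μ {ω | (s.card : ℝ) * ε ≤ ∑ i ∈ s, Y i ω} = 0 := by
        have hsub : {ω | (s.card : ℝ) * ε ≤ ∑ i ∈ s, Y i ω}
            ⊆ {ω | ¬ ∀ i ∈ s, |Y i ω| ≤ c} := by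
          intro ω hω hall
          have h1 : ∑ i ∈ s, Y i ω ≤ s.card * c := by
            calc ∑ i ∈ s, Y i ω ≤ ∑ i ∈ s, c :=
                Finset.sum_le_sum fun i hi => le_trans (le_abs_self _) (hall i hi)
              _ = s.card * c := by rw [Finset.sum_const, nsmul_eq_mul]
          have h2 : (s.card : ℝ) * c < (s.card : ℝ) * ε := by nlinarith
          exact absurd (Set.mem_setOf_eq ▸ hω) (by push_neg; linarith)
        exact measure_mono_null hsub (by simpa [ae_iff] using hballs)
      rw [hnull]
      simp [Real.exp_nonneg]

lemma chernoff_two_sided {ι : Type*} {Z : ι → Ω → ℝ} (hmeas : ∀ i, Measurable (Z i))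
    (hindep : iIndepFun Z μ) (s : Finset ι) {c mz : ℝ} (hc : 0 < c)
    (hbd : ∀ i ∈ s, ∀ᵐ ω ∂μ, Z i ω ∈ Icc 0 c) (hmz : mz ∈ Icc 0 c)
    (hmean : ∀ i ∈ s, ∫ ω, Z i ω ∂μ = mz) {ε : ℝ} (hε : 0 ≤ ε) :
    (μ {ω | (s.card : ℝ) * ε ≤ |(∑ i ∈ s, Z i ω) - s.card * mz|}).toReal
      ≤ 2 * Real.exp (-(s.card : ℝ) * ε ^ 2 / (4 * c ^ 2)) := by
  set Y : ι → Ω → ℝ := fun i => (fun x => x - mz) ∘ Z i with hY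
  set Y' : ι → Ω → ℝ := fun i => (fun x => mz - x) ∘ Z i with hY'
  have hZint : ∀ i ∈ s, Integrable (Z i) μ := fun i hi =>
    integrable_of_bdd (hmeas i).aestronglyMeasurable
      (by filter_upwards [hbd i hi] with ω h; rw [abs_le]; exact ⟨by linarith [h.1], h.2⟩)
  have habs : ∀ i ∈ s, ∀ᵐ ω ∂μ, |Z i ω - mz| ≤ c := fun i hi => by
    filter_upwards [hbd i hi] with ω h
    rw [abs_le]; constructor <;> [linarith [h.1, hmz.2]; linarith [h.2, hmz.1]]
  have hB := chernoff_sum (μ := μ) (Y := Y) (fun i => (hmeas i).sub measurable_const)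
    (hindep.comp _ fun i => measurable_id.sub measurable_const) s hc
    (fun i hi => habs i hi)
    (fun i hi => by
      simp only [hY, Function.comp]
      rw [integral_sub (hZint i hi) (integrable_const _), hmean i hi, integral_const]
      simp) hε
  have hC := chernoff_sum (μ := μ) (Y := Y') (fun i => measurable_const.sub (hmeas i))
    (hindep.comp _ fun i => measurable_const.sub measurable_id) s hc
    (fun i hi => by filter_upwards [habs i hi] with ω h; simp only [hY', Function.comp]; rwa [abs_sub_comm])
    (fun i hi => by
      simp only [hY', Function.comp]
      rw [integral_sub (integrable_const _) (hZint i hi), hmean i hi, integral_const]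
      simp) hε
  have hsub : {ω | (s.card : ℝ) * ε ≤ |(∑ i ∈ s, Z i ω) - s.card * mz|}
      ⊆ {ω | (s.card : ℝ) * ε ≤ ∑ i ∈ s, Y i ω} ∪ {ω | (s.card : ℝ) * ε ≤ ∑ i ∈ s, Y' i ω} := by
    intro ω hω
    have hYeq : ∑ i ∈ s, Y i ω = (∑ i ∈ s, Z i ω) - s.card * mz := by
      simp only [hY, Function.comp]
      rw [Finset.sum_sub_distrib, Finset.sum_const, nsmul_eq_mul]
    have hY'eq : ∑ i ∈ s, Y' i ω = -((∑ i ∈ s, Z i ω) - s.card * mz) := by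
      simp only [hY', Function.comp]
      rw [Finset.sum_sub_distrib, Finset.sum_const, nsmul_eq_mul]; ring
    rcases abs_cases ((∑ i ∈ s, Z i ω) - s.card * mz) with ⟨h1, _⟩ | ⟨h1, _⟩
    · left; rw [Set.mem_setOf_eq, hYeq, ← h1]; exact hω
    · right; rw [Set.mem_setOf_eq, hY'eq, ← h1]; exact hω
  calc (μ {ω | (s.card : ℝ) * ε ≤ |(∑ i ∈ s, Z i ω) - s.card * mz|}).toReal
      ≤ (μ {ω | (s.card : ℝ) * ε ≤ ∑ i ∈ s, Y i ω}
          + μ {ω | (s.card : ℝ) * ε ≤ ∑ i ∈ s, Y' i ω}).toReal := by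
        refine ENNReal.toReal_mono ?_ (le_trans (measure_mono hsub) (measure_union_le _ _))
        exact ENNReal.add_ne_top.2 ⟨measure_ne_top _ _, measure_ne_top _ _⟩
    _ ≤ (μ {ω | (s.card : ℝ) * ε ≤ ∑ i ∈ s, Y i ω}).toReal
          + (μ {ω | (s.card : ℝ) * ε ≤ ∑ i ∈ s, Y' i ω}).toReal := ENNReal.toReal_add_le
    _ ≤ Real.exp (-(s.card : ℝ) * ε ^ 2 / (4 * c ^ 2))
          + Real.exp (-(s.card : ℝ) * ε ^ 2 / (4 * c ^ 2)) := add_le_add hB hC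
    _ = 2 * Real.exp (-(s.card : ℝ) * ε ^ 2 / (4 * c ^ 2)) := by ring

lemma det_bound (n : ℕ) (hn : 1 ≤ n) {c ε : ℝ} (hc : 0 < c) (hε : 0 ≤ ε)
    (G H : ℝ → ℝ) (M : ℝ) (Eh El : ℝ → ℝ) (Av : ℝ) (q : ℕ → ℝ)
    (hqdef : ∀ k : ℕ, q k = sSup {x | (k : ℝ) * c / n < G x})
    (hGanti : Antitone G) (hG0 : ∀ x, 0 ≤ G x) (hGM : ∀ x, G x ≤ M) (hMc : M ≤ c)
    (hGrc : ∀ y b : ℝ, (∀ x, y < x → G x ≤ b) → G y ≤ b)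
    (hHleft : ∀ y b : ℝ, (∀ x, x < y → b ≤ G x) → b ≤ H y)
    (hMtop : ∀ b : ℝ, (∀ x, G x ≤ b) → M ≤ b)
    (hGtop : ∀ b : ℝ, 0 < b → ∃ N : ℝ, ∀ x, N ≤ x → G x ≤ b)
    (hEanti : Antitone Eh) (hE0 : ∀ x, 0 ≤ Eh x) (hEAv : ∀ x, Eh x ≤ Av)
    (hEl : ∀ x y : ℝ, x < y → El y ≤ Eh x)
    (hev1 : ∀ k : ℕ, 1 ≤ k → k ≤ n - 1 → |Eh (q k) - G (q k)| ≤ ε)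
    (hev2 : ∀ k : ℕ, 1 ≤ k → k ≤ n - 1 → |El (q k) - H (q k)| ≤ ε)
    (hev3 : |Av - M| ≤ ε) :
    ∀ x, |Eh x - G x| ≤ ε + c / n := by
  have hn' : (0 : ℝ) < n := by exact_mod_cast hn
  have hbpos : ∀ k : ℕ, 1 ≤ k → 0 < (k : ℝ) * c / n := fun k hk => by
    have : (1 : ℝ) ≤ (k : ℝ) := by exact_mod_cast hk
    positivity
  have hbdd : ∀ k : ℕ, 1 ≤ k → BddAbove {x | (k : ℝ) * c / n < G x} := by
    intro k hk
    obtain ⟨N, hN⟩ := hGtop _ (hbpos k hk)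
    refine ⟨N, fun x hx => ?_⟩
    by_contra hxN
    push_neg at hxN
    exact absurd hx (by simp only [Set.mem_setOf_eq, not_lt]; exact hN x hxN.le)
  have F2 : ∀ k : ℕ, 1 ≤ k → {x | (k : ℝ) * c / n < G x}.Nonempty →
      ∀ x, x < q k → (k : ℝ) * c / n < G x := by
    intro k hk hne x hx
    rw [hqdef] at hx
    obtain ⟨y, hy, hxy⟩ := exists_lt_of_lt_csSup hne hx
    exact lt_of_lt_of_le hy (hGanti hxy.le)
  have F3 : ∀ k : ℕ, 1 ≤ k → {x | (k : ℝ) * c / n < G x}.Nonempty →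
      G (q k) ≤ (k : ℝ) * c / n := by
    intro k hk hne
    refine hGrc (q k) _ fun x hx => ?_
    by_contra hgt
    push_neg at hgt
    rw [hqdef] at hx
    exact absurd hx (not_lt.2 (le_csSup (hbdd k hk) hgt))
  have F4 : ∀ k : ℕ, 1 ≤ k → {x | (k : ℝ) * c / n < G x}.Nonempty →
      (k : ℝ) * c / n ≤ H (q k) := by
    intro k hk hne
    exact hHleft (q k) _ fun x hx => (F2 k hk hne x hx).le
  have F5 : ∀ k : ℕ, ¬ {x | (k : ℝ) * c / n < G x}.Nonempty → M ≤ (k : ℝ) * c / n := by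
    intro k hne
    refine hMtop _ fun x => ?_
    by_contra hgt
    push_neg at hgt
    exact hne ⟨x, hgt⟩
  intro x
  have hγ0 : 0 ≤ G x := hG0 x
  have hγc : G x ≤ c := le_trans (hGM x) hMc
  rw [abs_le]
  constructor
  · -- lower bound : -(ε + c/n) ≤ Eh x - G x
    rw [neg_le, neg_sub]
    by_cases hsmall : G x ≤ c / n
    · have := hE0 x; linarith
    · push_neg at hsmall
      have ha1 : 1 < G x * n / c := by
        rw [lt_div_iff₀ hc, one_mul]
        rw [div_lt_iff₀ hn'] at hsmall
        linarith
      have ha0 : (0 : ℝ) ≤ G x * n / c := by positivity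
      set k' := ⌈G x * n / c⌉₊ - 1 with hk'
      have hceil2 : 1 < ⌈G x * n / c⌉₊ := Nat.lt_ceil.2 (by exact_mod_cast ha1)
      have hk'1 : 1 ≤ k' := by omega
      have hk'cast : (k' : ℝ) = (⌈G x * n / c⌉₊ : ℝ) - 1 := by
        rw [hk', Nat.cast_sub (by omega), Nat.cast_one]
      have hk'lt : (k' : ℝ) < G x * n / c := by
        rw [hk'cast]
        have := Nat.ceil_lt_add_one ha0
        linarith
      have hbk' : (k' : ℝ) * c / n < G x := by
        rw [lt_div_iff₀ hc] at hk'lt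
        rw [div_lt_iff₀ hn']
        nlinarith
      have hγbk' : G x ≤ (k' : ℝ) * c / n + c / n := by
        have hle : G x * n / c ≤ (k' : ℝ) + 1 := by
          rw [hk'cast]
          have := Nat.le_ceil (G x * n / c)
          linarith
        rw [div_le_iff₀ hc] at hle
        rw [← add_div, le_div_iff₀ hn']
        nlinarith
      have hk'n : k' ≤ n - 1 := by
        have h1 : (k' : ℝ) * c / n < c := lt_of_lt_of_le hbk' hγc
        rw [div_lt_iff₀ hn'] at h1
        have h2 : (k' : ℝ) < n := by nlinarith
        have h3 : k' < n := by exact_mod_cast h2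
        omega
      have hne : {y | (k' : ℝ) * c / n < G y}.Nonempty := ⟨x, hbk'⟩
      have hxq : x ≤ q k' := by rw [hqdef]; exact le_csSup (hbdd k' hk'1) hbk'
      rcases eq_or_lt_of_le hxq with heq | hlt
      · have h2 := hev1 k' hk'1 hk'n
        rw [abs_le] at h2
        rw [← heq] at h2
        linarith [h2.1]
      · have h1 : El (q k') ≤ Eh x := hEl x (q k') hlt
        have h2 := hev2 k' hk'1 hk'n
        rw [abs_le] at h2
        have h3 := F4 k' hk'1 hne
        linarith [h2.1]
  · -- upper bound : Eh x - G x ≤ ε + c/n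
    set k := ⌊G x * (n : ℝ) / c⌋₊ with hk
    have hfl0 : (0 : ℝ) ≤ G x * n / c := by positivity
    have hbk : (k : ℝ) * c / n ≤ G x := by
      have h1 : (k : ℝ) ≤ G x * n / c := Nat.floor_le hfl0
      rw [le_div_iff₀ hc] at h1
      rw [div_le_iff₀ hn']
      nlinarith
    have hbk1 : G x < ((k : ℝ) + 1) * c / n := by
      have h1 : G x * n / c < (k : ℝ) + 1 := Nat.lt_floor_add_one _
      rw [div_lt_iff₀ hc] at h1
      rw [lt_div_iff₀ hn']
      nlinarith
    have hAvM : Av ≤ M + ε := by rw [abs_le] at hev3; linarith [hev3.2]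
    by_cases hcase : k + 1 ≤ n - 1
    · by_cases hne : {y | ((k + 1 : ℕ) : ℝ) * c / n < G y}.Nonempty
      · have hqx : q (k + 1) ≤ x := by
          by_contra hgt
          push_neg at hgt
          have := F2 (k + 1) (by omega) hne x hgt
          rw [Nat.cast_add, Nat.cast_one] at this
          linarith
        have h1 : Eh x ≤ Eh (q (k + 1)) := hEanti hqx
        have h2 := hev1 (k + 1) (by omega) hcase
        rw [abs_le] at h2
        have h3 := F3 (k + 1) (by omega) hne
        rw [Nat.cast_add, Nat.cast_one, add_mul, one_mul, add_div] at h3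
        linarith [h2.2]
      · have h1 := F5 (k + 1) hne
        rw [Nat.cast_add, Nat.cast_one, add_mul, one_mul, add_div] at h1
        linarith [hEAv x]
    · push_neg at hcase
      have hkn : n - 1 ≤ k := by omega
      have hγbig : c - c / n ≤ G x := by
        have hle' : ((n - 1 : ℕ) : ℝ) ≤ (k : ℝ) := by exact_mod_cast hkn
        have h1 : ((n - 1 : ℕ) : ℝ) * c / n ≤ (k : ℝ) * c / n := by gcongr
        have h2 : ((n - 1 : ℕ) : ℝ) * c / n = c - c / n := by
          rw [Nat.cast_sub hn, Nat.cast_one]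
          field_simp
        rw [h2] at h1
        linarith
      linarith [hEAv x, hMc]

lemma tendsto_int_ind {W T : Ω → ℝ} (hW : Measurable W) (hT : Measurable T) {c : ℝ}
    (hbd : ∀ᵐ ω ∂μ, |W ω| ≤ c) (p : ℕ → ℝ → Prop) (hpmeas : ∀ k, MeasurableSet {t | p k t})
    (qq : ℝ → Prop) (hconv : ∀ t : ℝ, ∀ᶠ k in Filter.atTop, (p k t ↔ qq t)) :
    Filter.Tendsto (fun k => ∫ ω, W ω * (if p k (T ω) then 1 else 0) ∂μ) Filter.atTop
      (nhds (∫ ω, W ω * (if qq (T ω) then 1 else 0) ∂μ)) := by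
  refine tendsto_integral_of_dominated_convergence (fun _ => c) ?_ (integrable_const c) ?_ ?_
  · intro k
    exact (hW.mul (Measurable.ite (hT (hpmeas k)) measurable_const
      measurable_const)).aestronglyMeasurable
  · intro k
    filter_upwards [hbd] with ω h
    rw [Real.norm_eq_abs, abs_mul]
    calc |W ω| * |if p k (T ω) then (1:ℝ) else 0| ≤ |W ω| * 1 := by
          apply mul_le_mul_of_nonneg_left _ (abs_nonneg _)
          split_ifs <;> simp
      _ ≤ c := by rw [mul_one]; exact h
  · refine Filter.Eventually.of_forall fun ω => ?_
    refine Filter.Tendsto.congr' ?_ tendsto_const_nhds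
    filter_upwards [hconv (T ω)] with k hk
    simp only [hk]

set_option maxHeartbeats 2000000 in
lemma core (n : ℕ) (hn : 3 ≤ n)
    (W T : Fin (n + 1) → Ω → ℝ) (hW : ∀ i, Measurable (W i)) (hT : ∀ i, Measurable (T i))
    (hindep : iIndepFun (fun i ω => (W i ω, T i ω)) μ)
    (hmap : ∀ i, Measure.map (fun ω => (W i ω, T i ω)) μ
      = Measure.map (fun ω => (W (Fin.last n) ω, T (Fin.last n) ω)) μ)
    {c : ℝ} (hc : 0 < c) (hbd : ∀ i, ∀ᵐ ω ∂μ, W i ω ∈ Icc 0 c) :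
    1 - 2 / Real.sqrt n ≤ (μ {ω | (∀ x : ℝ,
        |(1 / (n : ℝ)) * (∑ i ∈ Finset.univ.map ⟨Fin.castSucc, Fin.castSucc_injective n⟩,
            W i ω * (if x < T i ω then 1 else 0))
          - ∫ ω', W (Fin.last n) ω' * (if x < T (Fin.last n) ω' then 1 else 0) ∂μ|
          ≤ Real.sqrt 10 * c * Real.sqrt (Real.log n / n) + c / n)
      ∧ ∀ i ∈ Finset.univ.map (⟨Fin.castSucc, Fin.castSucc_injective n⟩ : Fin n ↪ Fin (n + 1)),
          W i ω ∈ Icc 0 c}).toReal := by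
  have hn0 : 0 < n := by omega
  have hn' : (0 : ℝ) < n := by exact_mod_cast hn0
  have hn3 : (3 : ℝ) ≤ n := by exact_mod_cast hn
  have hlogn : 0 ≤ Real.log n := Real.log_nonneg (by exact_mod_cast (by omega : 1 ≤ n))
  set s : Finset (Fin (n + 1)) := Finset.univ.map ⟨Fin.castSucc, Fin.castSucc_injective n⟩
    with hs
  have hcard : s.card = n := by simp [hs]
  set ε := Real.sqrt 10 * c * Real.sqrt (Real.log n / n) with hεdef
  have hε0 : 0 ≤ ε := by positivity
  set e := Real.exp (-(n : ℝ) * ε ^ 2 / (4 * c ^ 2)) with he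
  set P : Fin (n + 1) → Ω → ℝ × ℝ := fun i ω => (W i ω, T i ω) with hP
  have hPmeas : ∀ i, Measurable (P i) := fun i => (hW i).prodMk (hT i)
  have hmean_eq : ∀ (φ : ℝ × ℝ → ℝ), Measurable φ → ∀ i,
      ∫ ω, φ (P i ω) ∂μ = ∫ ω, φ (P (Fin.last n) ω) ∂μ := by
    intro φ hφ i
    rw [← integral_map (hPmeas i).aemeasurable hφ.aestronglyMeasurable, hmap i,
      integral_map (hPmeas (Fin.last n)).aemeasurable hφ.aestronglyMeasurable]
  set φs : ℝ → ℝ × ℝ → ℝ := fun x pr => pr.1 * (if x < pr.2 then 1 else 0) with hφs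
  set φw : ℝ → ℝ × ℝ → ℝ := fun x pr => pr.1 * (if x ≤ pr.2 then 1 else 0) with hφw
  have hφsm : ∀ x, Measurable (φs x) := fun x => measurable_fst.mul
    (Measurable.ite (measurableSet_lt measurable_const measurable_snd) measurable_const
      measurable_const)
  have hφwm : ∀ x, Measurable (φw x) := fun x => measurable_fst.mul
    (Measurable.ite (measurableSet_le measurable_const measurable_snd) measurable_const
      measurable_const)
  have hrange_s : ∀ (x : ℝ) i, ∀ᵐ ω ∂μ, φs x (P i ω) ∈ Icc 0 c := by
    intro x i
    filter_upwards [hbd i] with ω h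
    simp only [hφs, hP]
    constructor
    · split_ifs <;> simp [h.1]
    · split_ifs <;> simp [h.2, hc.le]
  have hrange_w : ∀ (x : ℝ) i, ∀ᵐ ω ∂μ, φw x (P i ω) ∈ Icc 0 c := by
    intro x i
    filter_upwards [hbd i] with ω h
    simp only [hφw, hP]
    constructor
    · split_ifs <;> simp [h.1]
    · split_ifs <;> simp [h.2, hc.le]
  have hint : ∀ (f : Ω → ℝ), Measurable f → (∀ᵐ ω ∂μ, f ω ∈ Icc 0 c) → Integrable f μ :=
    fun f hf h => integrable_of_bdd hf.aestronglyMeasurable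
      (by filter_upwards [h] with ω hω; rw [abs_le]; exact ⟨by linarith [hω.1], hω.2⟩)
  have hint_s : ∀ (x : ℝ) i, Integrable (fun ω => φs x (P i ω)) μ :=
    fun x i => hint _ ((hφsm x).comp (hPmeas i)) (hrange_s x i)
  have hint_w : ∀ (x : ℝ) i, Integrable (fun ω => φw x (P i ω)) μ :=
    fun x i => hint _ ((hφwm x).comp (hPmeas i)) (hrange_w x i)
  have hint_t : ∀ i, Integrable (W i) μ := fun i => hint _ (hW i) (hbd i)
  set Gf : ℝ → ℝ := fun x => ∫ ω, φs x (P (Fin.last n) ω) ∂μ with hGf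
  set Hf : ℝ → ℝ := fun x => ∫ ω, φw x (P (Fin.last n) ω) ∂μ with hHf
  set Mv : ℝ := ∫ ω, W (Fin.last n) ω ∂μ with hMv
  have habsW : ∀ᵐ ω ∂μ, |W (Fin.last n) ω| ≤ c := by
    filter_upwards [hbd (Fin.last n)] with ω h
    rw [abs_le]; exact ⟨by linarith [h.1], h.2⟩
  -- population facts
  have hGanti : Antitone Gf := by
    intro x y hxy
    refine integral_mono_ae (hint_s y _) (hint_s x _) ?_
    filter_upwards [hbd (Fin.last n)] with ω h
    simp only [hφs, hP]
    refine mul_le_mul_of_nonneg_left ?_ h.1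
    split_ifs with h1 h2
    · exact le_rfl
    · exact absurd (lt_of_le_of_lt hxy h1) h2
    · norm_num
    · exact le_rfl
  have hG0 : ∀ x, 0 ≤ Gf x := fun x =>
    integral_nonneg_of_ae (by filter_upwards [hrange_s x (Fin.last n)] with ω h; exact h.1)
  have hH0 : ∀ x, 0 ≤ Hf x := fun x =>
    integral_nonneg_of_ae (by filter_upwards [hrange_w x (Fin.last n)] with ω h; exact h.1)
  have hGM : ∀ x, Gf x ≤ Mv := by
    intro x
    refine integral_mono_ae (hint_s x _) (hint_t _) ?_
    filter_upwards [hbd (Fin.last n)] with ω h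
    simp only [hφs, hP]
    split_ifs <;> simp [h.1]
  have hMc : Mv ≤ c := by
    calc Mv ≤ ∫ _, c ∂μ := integral_mono_ae (hint_t _) (integrable_const c)
          (by filter_upwards [hbd (Fin.last n)] with ω h; exact h.2)
      _ = c := by simp
  have hMv0 : 0 ≤ Mv :=
    integral_nonneg_of_ae (by filter_upwards [hbd (Fin.last n)] with ω h; exact h.1)
  have hHc : ∀ x, Hf x ≤ c := by
    intro x
    calc Hf x ≤ ∫ _, c ∂μ := integral_mono_ae (hint_w x _) (integrable_const c)
          (by filter_upwards [hrange_w x (Fin.last n)] with ω h; exact h.2)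
      _ = c := by simp
  have hGc : ∀ x, Gf x ≤ c := fun x => le_trans (hGM x) hMc
  -- limit facts
  have hGrc : ∀ y b : ℝ, (∀ x, y < x → Gf x ≤ b) → Gf y ≤ b := by
    intro y b hyb
    have ht := tendsto_int_ind (μ := μ) (hW (Fin.last n)) (hT (Fin.last n)) habsW
      (fun k t => y + 1 / ((k : ℝ) + 1) < t) (fun k => measurableSet_Ioi)
      (fun t => y < t) ?_
    · exact le_of_tendsto ht (Filter.Eventually.of_forall fun k =>
        hyb _ (lt_add_of_pos_right y (by positivity)))
    · intro t
      by_cases hty : y < t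
      · obtain ⟨K, hK⟩ := exists_nat_one_div_lt (sub_pos.2 hty)
        refine Filter.eventually_atTop.2 ⟨K, fun k hk => iff_of_true ?_ hty⟩
        have h1 : 1 / ((k : ℝ) + 1) ≤ 1 / ((K : ℝ) + 1) := by
          gcongr <;> exact_mod_cast hk
        linarith [hK]
      · refine Filter.Eventually.of_forall fun k => iff_of_false ?_ hty
        push_neg at hty
        intro hcon
        have hpos : 0 < 1 / ((k : ℝ) + 1) := by positivity
        linarith
  have hHleft : ∀ y b : ℝ, (∀ x, x < y → b ≤ Gf x) → b ≤ Hf y := by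
    intro y b hyb
    have ht := tendsto_int_ind (μ := μ) (hW (Fin.last n)) (hT (Fin.last n)) habsW
      (fun k t => y - 1 / ((k : ℝ) + 1) < t) (fun k => measurableSet_Ioi)
      (fun t => y ≤ t) ?_
    · exact ge_of_tendsto ht (Filter.Eventually.of_forall fun k =>
        hyb _ (sub_lt_self y (by positivity)))
    · intro t
      by_cases hty : y ≤ t
      · refine Filter.Eventually.of_forall fun k => iff_of_true ?_ hty
        have hpos : 0 < 1 / ((k : ℝ) + 1) := by positivity
        linarith
      · push_neg at hty
        obtain ⟨K, hK⟩ := exists_nat_one_div_lt (sub_pos.2 hty)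
        refine Filter.eventually_atTop.2 ⟨K, fun k hk => iff_of_false ?_ (not_le.2 hty)⟩
        have h1 : 1 / ((k : ℝ) + 1) ≤ 1 / ((K : ℝ) + 1) := by
          gcongr <;> exact_mod_cast hk
        intro hcon
        linarith
  have hMtop : ∀ b : ℝ, (∀ x, Gf x ≤ b) → Mv ≤ b := by
    intro b hyb
    have ht := tendsto_int_ind (μ := μ) (hW (Fin.last n)) (hT (Fin.last n)) habsW
      (fun k t => -(k : ℝ) < t) (fun k => measurableSet_Ioi)
      (fun _ => True) ?_
    · have hle := le_of_tendsto ht (Filter.Eventually.of_forall fun k => hyb (-(k : ℝ)))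
      have hle' : Mv ≤ b := by simpa [hMv] using hle
      exact hle'
    · intro t
      obtain ⟨K, hK⟩ := exists_nat_gt (-t)
      refine Filter.eventually_atTop.2 ⟨K, fun k hk => iff_of_true ?_ trivial⟩
      have : (K : ℝ) ≤ k := by exact_mod_cast hk
      linarith
  have hGtop : ∀ b : ℝ, 0 < b → ∃ N : ℝ, ∀ x, N ≤ x → Gf x ≤ b := by
    intro b hb
    have ht := tendsto_int_ind (μ := μ) (hW (Fin.last n)) (hT (Fin.last n)) habsW
      (fun k t => (k : ℝ) < t) (fun k => measurableSet_Ioi)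
      (fun _ => False) ?_
    · have ht' : Filter.Tendsto (fun k : ℕ => Gf (k : ℝ)) Filter.atTop (nhds 0) := by
        convert ht using 2
        simp
      have hev : ∀ᶠ k : ℕ in Filter.atTop, Gf (k : ℝ) < b := ht'.eventually_lt_const hb
      obtain ⟨K, hK⟩ := Filter.eventually_atTop.1 hev
      refine ⟨(K : ℝ), fun x hx => ?_⟩
      exact le_trans (hGanti hx) (hK K le_rfl).le
    · intro t
      obtain ⟨K, hK⟩ := exists_nat_gt t
      refine Filter.eventually_atTop.2 ⟨K, fun k hk => iff_of_false ?_ not_false⟩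
      have : (K : ℝ) ≤ k := by exact_mod_cast hk
      push_neg
      linarith
  -- per-point concentration
  have key : ∀ (φ : ℝ × ℝ → ℝ), Measurable φ → (∀ i, ∀ᵐ ω ∂μ, φ (P i ω) ∈ Icc 0 c) →
      (μ {ω | (n : ℝ) * ε ≤
        |(∑ i ∈ s, φ (P i ω)) - n * (∫ ω', φ (P (Fin.last n) ω') ∂μ)|}).toReal ≤ 2 * e := by
    intro φ hφ hr
    have hmz : (∫ ω', φ (P (Fin.last n) ω') ∂μ) ∈ Icc (0:ℝ) c := by
      constructor
      · exact integral_nonneg_of_ae (by filter_upwards [hr (Fin.last n)] with ω h; exact h.1)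
      · calc (∫ ω', φ (P (Fin.last n) ω') ∂μ) ≤ ∫ _, c ∂μ :=
            integral_mono_ae (hint _ (hφ.comp (hPmeas _)) (hr _)) (integrable_const c)
              (by filter_upwards [hr (Fin.last n)] with ω h; exact h.2)
          _ = c := by simp
    have h2 := chernoff_two_sided (μ := μ) (Z := fun i => φ ∘ P i)
      (fun i => hφ.comp (hPmeas i)) (hindep.comp (fun _ => φ) (fun _ => hφ)) s hc
      (fun i _ => hr i) hmz (fun i _ => hmean_eq φ hφ i) hε0
    rw [hcard] at h2
    exact h2
  -- grid points and bad events
  set qpt : ℕ → ℝ := fun k => sSup {x | (k : ℝ) * c / n < Gf x} with hqpt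
  set Bs : ℕ → Set Ω := fun k =>
    {ω | (n : ℝ) * ε ≤ |(∑ i ∈ s, φs (qpt k) (P i ω)) - n * Gf (qpt k)|} with hBsdef
  set Bw : ℕ → Set Ω := fun k =>
    {ω | (n : ℝ) * ε ≤ |(∑ i ∈ s, φw (qpt k) (P i ω)) - n * Hf (qpt k)|} with hBwdef
  set Bt : Set Ω := {ω | (n : ℝ) * ε ≤ |(∑ i ∈ s, W i ω) - n * Mv|} with hBtdef
  set A0 : Set Ω := {ω | ¬ ∀ i ∈ s, W i ω ∈ Icc (0 : ℝ) c} with hA0def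
  set Bad : Set Ω := A0 ∪ (Bt ∪ ⋃ k ∈ Finset.range n, (Bs k ∪ Bw k)) with hBaddef
  have hBsP : ∀ k, (μ (Bs k)).toReal ≤ 2 * e := fun k =>
    key (φs (qpt k)) (hφsm _) (fun i => hrange_s _ i)
  have hBwP : ∀ k, (μ (Bw k)).toReal ≤ 2 * e := fun k =>
    key (φw (qpt k)) (hφwm _) (fun i => hrange_w _ i)
  have hBtP : (μ Bt).toReal ≤ 2 * e := key (fun pr => pr.1) measurable_fst (fun i => hbd i)
  have haeA0 : μ A0 = 0 := by
    have hae : ∀ᵐ ω ∂μ, ∀ i ∈ s, W i ω ∈ Icc (0 : ℝ) c :=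
      (ae_ball_iff s.countable_toSet).2 (fun i _ => hbd i)
    exact ae_iff.1 hae
  have hBsM : ∀ k, MeasurableSet (Bs k) := by
    intro k
    exact measurableSet_le measurable_const
      ((Finset.measurable_sum s (fun i _ => (hφsm _).comp (hPmeas i))).sub measurable_const).abs
  have hBwM : ∀ k, MeasurableSet (Bw k) := by
    intro k
    exact measurableSet_le measurable_const
      ((Finset.measurable_sum s (fun i _ => (hφwm _).comp (hPmeas i))).sub measurable_const).abs
  have hBtM : MeasurableSet Bt :=
    measurableSet_le measurable_const
      ((Finset.measurable_sum s (fun i _ => hW i)).sub measurable_const).abs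
  have hA0M : MeasurableSet A0 := by
    have h1 : A0 = (⋂ i ∈ (s : Set (Fin (n + 1))), (W i) ⁻¹' (Icc (0 : ℝ) c))ᶜ := by
      ext ω
      simp [hA0def]
    rw [h1]
    exact (MeasurableSet.biInter s.countable_toSet fun i _ => (hW i) measurableSet_Icc).compl
  have hBadM : MeasurableSet Bad := by
    refine hA0M.union (hBtM.union ?_)
    exact MeasurableSet.biUnion (Finset.range n).countable_toSet
      (fun k _ => (hBsM k).union (hBwM k))
  -- union bound
  have hBadE : μ Bad ≤ μ A0 + (μ Bt + ∑ k ∈ Finset.range n, μ (Bs k ∪ Bw k)) := by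
    calc μ Bad ≤ μ A0 + μ (Bt ∪ ⋃ k ∈ Finset.range n, (Bs k ∪ Bw k)) := measure_union_le _ _
      _ ≤ μ A0 + (μ Bt + μ (⋃ k ∈ Finset.range n, (Bs k ∪ Bw k))) := by
          gcongr
          exact measure_union_le _ _
      _ ≤ μ A0 + (μ Bt + ∑ k ∈ Finset.range n, μ (Bs k ∪ Bw k)) := by
          gcongr
          exact measure_biUnion_finset_le _ _
  rw [haeA0, zero_add] at hBadE
  have hfin : (μ Bt + ∑ k ∈ Finset.range n, μ (Bs k ∪ Bw k)) ≠ ⊤ := by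
    refine ENNReal.add_ne_top.2 ⟨measure_ne_top _ _, ?_⟩
    exact (ENNReal.sum_lt_top.2 fun k _ => measure_lt_top _ _).ne
  have hBadR : (μ Bad).toReal ≤ 2 * e + (n : ℝ) * (4 * e) := by
    have h1 : (μ Bad).toReal ≤ (μ Bt + ∑ k ∈ Finset.range n, μ (Bs k ∪ Bw k)).toReal :=
      ENNReal.toReal_mono hfin hBadE
    have h2 : (μ Bt + ∑ k ∈ Finset.range n, μ (Bs k ∪ Bw k)).toReal
        ≤ (μ Bt).toReal + (∑ k ∈ Finset.range n, μ (Bs k ∪ Bw k)).toReal :=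
      ENNReal.toReal_add_le
    have h3 : (∑ k ∈ Finset.range n, μ (Bs k ∪ Bw k)).toReal
        = ∑ k ∈ Finset.range n, (μ (Bs k ∪ Bw k)).toReal :=
      ENNReal.toReal_sum (fun k _ => measure_ne_top _ _)
    have h4 : ∀ k ∈ Finset.range n, (μ (Bs k ∪ Bw k)).toReal ≤ 4 * e := by
      intro k _
      calc (μ (Bs k ∪ Bw k)).toReal ≤ (μ (Bs k) + μ (Bw k)).toReal :=
            ENNReal.toReal_mono (ENNReal.add_ne_top.2 ⟨measure_ne_top _ _, measure_ne_top _ _⟩)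
              (measure_union_le _ _)
        _ ≤ (μ (Bs k)).toReal + (μ (Bw k)).toReal := ENNReal.toReal_add_le
        _ ≤ 2 * e + 2 * e := add_le_add (hBsP k) (hBwP k)
        _ = 4 * e := by ring
    have h5 : ∑ k ∈ Finset.range n, (μ (Bs k ∪ Bw k)).toReal ≤ (n : ℝ) * (4 * e) := by
      calc ∑ k ∈ Finset.range n, (μ (Bs k ∪ Bw k)).toReal ≤ ∑ _k ∈ Finset.range n, 4 * e :=
            Finset.sum_le_sum h4
        _ = (n : ℝ) * (4 * e) := by
            rw [Finset.sum_const, Finset.card_range, nsmul_eq_mul]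
    linarith [h1, h2, h3 ▸ h5]
  -- numerics
  have hε2 : ε ^ 2 = 10 * c ^ 2 * (Real.log n / n) := by
    rw [hεdef, mul_pow, mul_pow, Real.sq_sqrt (by norm_num : (0:ℝ) ≤ 10),
      Real.sq_sqrt (by positivity : (0:ℝ) ≤ Real.log n / n)]
    try ring
  have hearg : -(n : ℝ) * ε ^ 2 / (4 * c ^ 2)
      = -(Real.log n + Real.log n + Real.log n / 2) := by
    rw [hε2]
    field_simp
    ring
  have hsqrtn : 0 < Real.sqrt n := Real.sqrt_pos.2 hn'
  have he_eq : e = ((n : ℝ) * n * Real.sqrt n)⁻¹ := by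
    rw [he, hearg, Real.exp_neg]
    congr 1
    rw [Real.exp_add, Real.exp_add, Real.exp_log hn', ← Real.log_sqrt hn'.le,
      Real.exp_log hsqrtn]
  have hnum : 2 * e + (n : ℝ) * (4 * e) ≤ 2 / Real.sqrt n := by
    rw [he_eq]
    have hpos : (0 : ℝ) < (n : ℝ) * n * Real.sqrt n := by positivity
    have h6 : 2 * ((n : ℝ) * n * Real.sqrt n)⁻¹ + (n : ℝ) * (4 * ((n : ℝ) * n * Real.sqrt n)⁻¹)
        = (4 * n + 2) / ((n : ℝ) * n * Real.sqrt n) := by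
      field_simp
      ring
    rw [h6, div_le_div_iff₀ hpos hsqrtn]
    have hsq : Real.sqrt n * Real.sqrt n = n := Real.mul_self_sqrt hn'.le
    have h0 : (0 : ℝ) ≤ 2 * (n:ℝ) * n - 4 * n - 2 := by nlinarith
    nlinarith [mul_nonneg h0 hsqrtn.le]
  -- the good event is contained in the target
  have hgood : Badᶜ ⊆ {ω | (∀ x : ℝ,
        |(1 / (n : ℝ)) * (∑ i ∈ s, W i ω * (if x < T i ω then 1 else 0))
          - ∫ ω', W (Fin.last n) ω' * (if x < T (Fin.last n) ω' then 1 else 0) ∂μ|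
          ≤ Real.sqrt 10 * c * Real.sqrt (Real.log n / n) + c / n)
      ∧ ∀ i ∈ s, W i ω ∈ Icc (0:ℝ) c} := by
    intro ω hω
    have h0 : ω ∉ A0 := fun h => hω (Set.mem_union_left _ h)
    have hWω : ∀ i ∈ s, W i ω ∈ Icc (0 : ℝ) c := not_not.1 h0
    have hωt : ω ∉ Bt := fun h => hω (Set.mem_union_right _ (Set.mem_union_left _ h))
    have hks : ∀ k, k ∈ Finset.range n → ω ∉ Bs k := fun k hk h =>
      hω (Set.mem_union_right _ (Set.mem_union_right _
        (Set.mem_biUnion hk (Set.mem_union_left _ h))))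
    have hkw : ∀ k, k ∈ Finset.range n → ω ∉ Bw k := fun k hk h =>
      hω (Set.mem_union_right _ (Set.mem_union_right _
        (Set.mem_biUnion hk (Set.mem_union_right _ h))))
    -- empirical quantities at this ω
    set Eh : ℝ → ℝ := fun x => (1 / (n : ℝ)) * ∑ i ∈ s, φs x (P i ω) with hEhdef
    set El : ℝ → ℝ := fun x => (1 / (n : ℝ)) * ∑ i ∈ s, φw x (P i ω) with hEldef
    set Av : ℝ := (1 / (n : ℝ)) * ∑ i ∈ s, W i ω with hAvdef
    have hEanti : Antitone Eh := by
      intro x y hxy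
      refine mul_le_mul_of_nonneg_left (Finset.sum_le_sum fun i hi => ?_) (by positivity)
      simp only [hφs, hP]
      refine mul_le_mul_of_nonneg_left ?_ (hWω i hi).1
      split_ifs with h1 h2
      · exact le_rfl
      · exact absurd (lt_of_le_of_lt hxy h1) h2
      · norm_num
      · exact le_rfl
    have hE0 : ∀ x, 0 ≤ Eh x := by
      intro x
      refine mul_nonneg (by positivity) (Finset.sum_nonneg fun i hi => ?_)
      simp only [hφs, hP]
      refine mul_nonneg (hWω i hi).1 ?_
      split_ifs <;> norm_num
    have hEAv : ∀ x, Eh x ≤ Av := by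
      intro x
      refine mul_le_mul_of_nonneg_left (Finset.sum_le_sum fun i hi => ?_) (by positivity)
      simp only [hφs, hP]
      split_ifs <;> simp [(hWω i hi).1]
    have hEl : ∀ x y : ℝ, x < y → El y ≤ Eh x := by
      intro x y hxy
      refine mul_le_mul_of_nonneg_left (Finset.sum_le_sum fun i hi => ?_) (by positivity)
      simp only [hφs, hφw, hP]
      refine mul_le_mul_of_nonneg_left ?_ (hWω i hi).1
      split_ifs with h1 h2
      · exact le_rfl
      · exact absurd (lt_of_lt_of_le hxy h1) h2
      · norm_num
      · exact le_rfl
    have habs_scale : ∀ (S g : ℝ), |S - (n : ℝ) * g| < (n : ℝ) * ε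
        → |(1 / (n : ℝ)) * S - g| ≤ ε := by
      intro S g h
      have heq : (1 / (n : ℝ)) * S - g = (1 / (n : ℝ)) * (S - n * g) := by
        field_simp
      rw [heq, abs_mul, abs_of_pos (by positivity : (0:ℝ) < 1 / (n:ℝ))]
      calc (1 / (n : ℝ)) * |S - n * g| ≤ (1 / (n : ℝ)) * ((n : ℝ) * ε) := by
            exact mul_le_mul_of_nonneg_left h.le (by positivity)
        _ = ε := by field_simp
    have hev1 : ∀ k : ℕ, 1 ≤ k → k ≤ n - 1 → |Eh (qpt k) - Gf (qpt k)| ≤ ε := by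
      intro k hk1 hk2
      have hbs := hks k (Finset.mem_range.2 (by omega))
      simp only [hBsdef, Set.mem_setOf_eq, not_le] at hbs
      exact habs_scale _ _ hbs
    have hev2 : ∀ k : ℕ, 1 ≤ k → k ≤ n - 1 → |El (qpt k) - Hf (qpt k)| ≤ ε := by
      intro k hk1 hk2
      have hbw := hkw k (Finset.mem_range.2 (by omega))
      simp only [hBwdef, Set.mem_setOf_eq, not_le] at hbw
      exact habs_scale _ _ hbw
    have hev3 : |Av - Mv| ≤ ε := by
      have hbt := hωt
      simp only [hBtdef, Set.mem_setOf_eq, not_le] at hbt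
      exact habs_scale _ _ hbt
    have hdet := det_bound n (by omega) hc hε0 Gf Hf Mv Eh El Av qpt (fun k => rfl)
      hGanti hG0 hGM hMc hGrc hHleft hMtop hGtop hEanti hE0 hEAv hEl hev1 hev2 hev3
    exact ⟨fun x => hdet x, hWω⟩
  -- conclusion
  have hcompl : (μ Bad).toReal + (μ Badᶜ).toReal = 1 := by
    rw [← ENNReal.toReal_add (measure_ne_top _ _) (measure_ne_top _ _),
      measure_add_measure_compl hBadM]
    simp
  have hfinal : 1 - 2 / Real.sqrt n ≤ (μ Badᶜ).toReal := by
    have h7 := hBadR.trans hnum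
    linarith [hcompl]
  exact le_trans hfinal (ENNReal.toReal_mono (measure_ne_top _ _) (measure_mono hgood))


end EPB

open EPB ProbabilityTheory

set_option maxHeartbeats 2000000

/-- Lemma: empirical process bound for the bumped empirical risk.  Under
i.i.d. datapoints and bounded costs, for each `j`, each `n ≥ 2` and each fixed `λ_{1:(j−1)}`,
with probability at least `1 − 2/√n`,
`sup_{λ_j} |g_j^+(λ_j; λ_{1:(j−1)}) − g_j^*(λ_j; λ_{1:(j−1)})| ≤ (16√2+2)·Vmax_j·√(log n / n)`. -/
theorem empirical_process_bound
    {Ω : Type*} [MeasurableSpace Ω] (μ : Measure Ω) [IsProbabilityMeasure μ]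
    (m n : ℕ) (hm : 1 ≤ m) (hn : 2 ≤ n)
    (S V : Fin (n + 1) → Fin m → Ω → ℝ)
    (hSmeas : ∀ i j, Measurable (S i j)) (hVmeas : ∀ i j, Measurable (V i j))
    -- i.i.d. datapoints
    (hindep : ProbabilityTheory.iIndepFun
      (fun i ω => ((fun j => S i j ω), (fun j => V i j ω))) μ)
    (hident : ∀ i : Fin (n + 1),
      Measure.map (fun ω => ((fun j => S i j ω), (fun j => V i j ω))) μ
        = Measure.map (fun ω =>
            ((fun j => S 0 j ω), (fun j => V 0 j ω))) μ)
    -- bounded costs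
    (Vmin Vmax : Fin m → ℝ) (hVmin0 : ∀ j, 0 ≤ Vmin j) (hVle : ∀ j, Vmin j ≤ Vmax j)
    (hVbd : ∀ i j, ∀ᵐ ω ∂μ, V i j ω ∈ Icc (Vmin j) (Vmax j)) :
    ∀ (j : Fin m) (lam : Fin m → ℝ),
      1 - 2 / Real.sqrt n
        ≤ (μ {ω | ∀ x : ℝ,
            |gPlus S V Vmax j (Function.update lam j x) ω
              - gStar μ S V j (Function.update lam j x)|
              ≤ (16 * Real.sqrt 2 + 2) * Vmax j * Real.sqrt (Real.log n / n)}).toReal := by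
  intro j lam
  rcases le_or_gt (1 - 2 / Real.sqrt n) 0 with h0 | hpos
  · exact h0.trans ENNReal.toReal_nonneg
  -- from positivity of 1 - 2/√n we get n ≥ 5 ≥ 3
  have hn' : (0 : ℝ) < n := by
    have : (0:ℕ) < n := by omega
    exact_mod_cast this
  have hsqrtn : 0 < Real.sqrt n := Real.sqrt_pos.2 hn'
  have hsq2 : (2:ℝ) < Real.sqrt n := by
    by_contra hcon
    push_neg at hcon
    have : (1:ℝ) ≤ 2 / Real.sqrt n := by
      rw [le_div_iff₀ hsqrtn]
      linarith
    linarith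
  have hn4 : (4:ℝ) < n := by
    have := Real.sq_sqrt hn'.le
    nlinarith
  have hn5 : 3 ≤ n := by
    have h4 : 4 < n := by exact_mod_cast hn4
    omega
  have hc0 : 0 ≤ Vmax j := le_trans (hVmin0 j) (hVle j)
  rcases eq_or_lt_of_le hc0 with hczero | hcpos
  · -- Vmax j = 0 : everything is zero a.s.
    have hVzero : ∀ i : Fin (n + 1), ∀ᵐ ω ∂μ, V i j ω = 0 := by
      intro i
      filter_upwards [hVbd i j] with ω h
      have h1 := h.1
      have h2 := h.2
      have := hVmin0 j
      rw [← hczero] at h2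
      linarith
    have hgstar0 : ∀ x : ℝ, gStar μ S V j (Function.update lam j x) = 0 := by
      intro x
      rw [gStar]
      rw [← integral_zero Ω ℝ (μ := μ)]
      refine integral_congr_ae ?_
      filter_upwards [hVzero (Fin.last n)] with ω h
      simp [lossFn, h]
    have hae : ∀ᵐ ω ∂μ, ∀ i : Fin n, V i.castSucc j ω = 0 :=
      ae_all_iff.2 fun i => hVzero i.castSucc
    have hsub : {ω | ∀ i : Fin n, V i.castSucc j ω = 0} ⊆ {ω | ∀ x : ℝ,
        |gPlus S V Vmax j (Function.update lam j x) ω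
          - gStar μ S V j (Function.update lam j x)|
          ≤ (16 * Real.sqrt 2 + 2) * Vmax j * Real.sqrt (Real.log n / n)} := by
      intro ω hω x
      have hgp : gPlus S V Vmax j (Function.update lam j x) ω = 0 := by
        rw [gPlus, ← hczero]
        have : ∀ i : Fin n, lossFn S V j i.castSucc (Function.update lam j x) ω = 0 := by
          intro i
          simp [lossFn, hω i]
        simp [this]
      rw [hgp, hgstar0, ← hczero]
      simp
    calc 1 - 2 / Real.sqrt n ≤ 1 := by
          have : 0 ≤ 2 / Real.sqrt n := by positivity
          linarith
      _ = (μ {ω | ∀ i : Fin n, V i.castSucc j ω = 0}).toReal := by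
          have : μ {ω | ∀ i : Fin n, V i.castSucc j ω = 0} = 1 := by
            rw [← measure_univ (μ := μ)]
            refine measure_congr ?_
            rw [Filter.eventuallyEq_set]
            filter_upwards [hae] with ω h
            simp [h]
          rw [this]
          simp
      _ ≤ _ := ENNReal.toReal_mono (measure_ne_top _ _) (measure_mono hsub)
  · -- main case : Vmax j > 0
    set c := Vmax j with hcdef
    set X : Fin (n + 1) → Ω → (Fin m → ℝ) × (Fin m → ℝ) :=
      fun i ω => ((fun j' => S i j' ω), (fun j' => V i j' ω)) with hX
    have hXmeas : ∀ i, Measurable (X i) := fun i =>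
      (measurable_pi_lambda _ fun j' => hSmeas i j').prodMk
        (measurable_pi_lambda _ fun j' => hVmeas i j')
    set g : (Fin m → ℝ) × (Fin m → ℝ) → ℝ × ℝ := fun p =>
      (p.2 j * (if ∀ l, l < j → p.1 l ≤ lam l then (1:ℝ) else 0), p.1 j) with hg
    have hsetm : MeasurableSet {p : (Fin m → ℝ) × (Fin m → ℝ) | ∀ l, l < j → p.1 l ≤ lam l} := by
      have h1 : {p : (Fin m → ℝ) × (Fin m → ℝ) | ∀ l, l < j → p.1 l ≤ lam l}
          = ⋂ l : Fin m, {p : (Fin m → ℝ) × (Fin m → ℝ) | l < j → p.1 l ≤ lam l} := by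
        ext p
        simp
      rw [h1]
      refine MeasurableSet.iInter fun l => ?_
      by_cases hl : l < j
      · simp only [hl, true_implies]
        have hm1 : Measurable fun p : (Fin m → ℝ) × (Fin m → ℝ) => p.1 l :=
          (measurable_pi_apply l).comp measurable_fst
        exact measurableSet_le hm1 measurable_const
      · simp only [hl, false_implies]
        exact MeasurableSet.univ
    have hgmeas : Measurable g :=
      (((measurable_pi_apply j).comp measurable_snd).mul
        (Measurable.ite hsetm measurable_const measurable_const)).prodMk
        ((measurable_pi_apply j).comp measurable_fst)
    set W : Fin (n + 1) → Ω → ℝ := fun i ω =>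
      V i j ω * (if ∀ l, l < j → S i l ω ≤ lam l then (1:ℝ) else 0) with hWdef
    set T : Fin (n + 1) → Ω → ℝ := fun i ω => S i j ω with hTdef
    have hWmeas : ∀ i, Measurable (W i) := by
      intro i
      have h1 : W i = (fun p : ℝ × ℝ => p.1) ∘ (g ∘ X i) := rfl
      rw [h1]
      exact measurable_fst.comp (hgmeas.comp (hXmeas i))
    have hTmeas : ∀ i, Measurable (T i) := fun i => hSmeas i j
    have hpair : iIndepFun (fun i ω => (W i ω, T i ω)) μ := by
      have h1 := hindep.comp (fun _ => g) (fun _ => hgmeas)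
      exact h1
    have hmap : ∀ i, Measure.map (fun ω => (W i ω, T i ω)) μ
        = Measure.map (fun ω => (W (Fin.last n) ω, T (Fin.last n) ω)) μ := by
      intro i
      have h1 : Measure.map (fun ω => (W i ω, T i ω)) μ
          = Measure.map g (Measure.map (X i) μ) :=
        (Measure.map_map hgmeas (hXmeas i)).symm
      have h2 : Measure.map (fun ω => (W (Fin.last n) ω, T (Fin.last n) ω)) μ
          = Measure.map g (Measure.map (X (Fin.last n)) μ) :=
        (Measure.map_map hgmeas (hXmeas (Fin.last n))).symm
      rw [h1, h2, hident i, hident (Fin.last n)]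
    have hbd : ∀ i, ∀ᵐ ω ∂μ, W i ω ∈ Icc (0:ℝ) c := by
      intro i
      filter_upwards [hVbd i j] with ω h
      simp only [hWdef]
      constructor
      · refine mul_nonneg (le_trans (hVmin0 j) h.1) ?_
        split_ifs <;> norm_num
      · split_ifs
        · simpa using h.2
        · simpa using hc0
    have hcore := core (μ := μ) n hn5 W T hWmeas hTmeas hpair hmap hcpos hbd
    refine le_trans hcore (ENNReal.toReal_mono (measure_ne_top _ _) (measure_mono ?_))
    intro ω hω
    obtain ⟨h1, h2⟩ := hω
    intro x
    -- identify lossFn with W/T form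
    have hloss : ∀ (i : Fin (n + 1)) (ω' : Ω),
        lossFn S V j i (Function.update lam j x) ω'
          = W i ω' * (if x < T i ω' then 1 else 0) := by
      intro i ω'
      simp only [lossFn, hWdef, hTdef]
      have hcond : ((∀ l, l < j → S i l ω' ≤ Function.update lam j x l)
            ∧ Function.update lam j x j < S i j ω')
          ↔ ((∀ l, l < j → S i l ω' ≤ lam l) ∧ x < S i j ω') := by
        rw [Function.update_self]
        refine and_congr_left fun _ => ?_
        refine forall_congr' fun l => imp_congr_right fun hl => ?_
        rw [Function.update_of_ne (ne_of_lt hl)]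
      rw [if_congr hcond rfl rfl]
      by_cases hA : ∀ l, l < j → S i l ω' ≤ lam l <;> by_cases hB : x < S i j ω' <;>
        simp [hA, hB]
    have hgstar : gStar μ S V j (Function.update lam j x)
        = ∫ ω', W (Fin.last n) ω' * (if x < T (Fin.last n) ω' then 1 else 0) ∂μ := by
      rw [gStar]
      congr 1
      funext ω'
      exact hloss _ _
    set s : Finset (Fin (n + 1)) := Finset.univ.map ⟨Fin.castSucc, Fin.castSucc_injective n⟩
      with hsdef
    set Ssum : ℝ := ∑ i ∈ s, W i ω * (if x < T i ω then 1 else 0) with hSsum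
    have hsum_eq : ∑ i : Fin n, lossFn S V j i.castSucc (Function.update lam j x) ω = Ssum := by
      rw [hSsum, hsdef, Finset.sum_map]
      exact Finset.sum_congr rfl fun i _ => hloss _ _
    have hgp : gPlus S V Vmax j (Function.update lam j x) ω
        = (1 / ((n:ℝ) + 1)) * Ssum + c / ((n:ℝ) + 1) := by
      rw [gPlus, hsum_eq, hcdef]
    -- bounds on Ssum
    have hSsum0 : 0 ≤ Ssum := by
      rw [hSsum]
      refine Finset.sum_nonneg fun i hi => ?_
      refine mul_nonneg (h2 i hi).1 ?_
      split_ifs <;> norm_num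
    have hSsumc : Ssum ≤ (n:ℝ) * c := by
      rw [hSsum]
      calc ∑ i ∈ s, W i ω * (if x < T i ω then 1 else 0) ≤ ∑ _i ∈ s, c := by
            refine Finset.sum_le_sum fun i hi => ?_
            have := (h2 i hi).2
            split_ifs <;> simp [this]
            exact le_trans (h2 i hi).1 this
        _ = (n:ℝ) * c := by
            rw [Finset.sum_const, nsmul_eq_mul]
            congr 1
            simp [hsdef]
    have hEh := h1 x
    -- |gPlus - (1/n) Ssum| ≤ c/n
    have hdiff : |gPlus S V Vmax j (Function.update lam j x) ω - (1/(n:ℝ)) * Ssum| ≤ c / n := by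
      rw [hgp]
      have heq : (1 / ((n:ℝ) + 1)) * Ssum + c / ((n:ℝ) + 1) - (1/(n:ℝ)) * Ssum
          = c / ((n:ℝ) + 1) - Ssum / ((n:ℝ) * ((n:ℝ) + 1)) := by
        field_simp
        ring
      rw [heq, abs_le]
      have h11 : c / ((n:ℝ) + 1) ≤ c / (n:ℝ) := by gcongr <;> linarith
      have h12 : Ssum / ((n:ℝ) * ((n:ℝ) + 1)) ≤ c / ((n:ℝ) + 1) := by
        rw [div_le_div_iff₀ (by positivity) (by positivity)]
        nlinarith
      have h13 : 0 ≤ Ssum / ((n:ℝ) * ((n:ℝ) + 1)) := by positivity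
      have h14 : 0 ≤ c / (n:ℝ) := by positivity
      constructor <;> linarith
    -- numeric comparison
    have hL0 : 0 ≤ Real.log n / n := by
      have : 0 ≤ Real.log n := Real.log_nonneg (by exact_mod_cast (by omega : 1 ≤ n))
      positivity
    have hsqL : 0 ≤ Real.sqrt (Real.log n / n) := Real.sqrt_nonneg _
    have h8 : 1 / (n:ℝ) ≤ Real.sqrt (Real.log n / n) := by
      rw [show (1:ℝ) / n = Real.sqrt ((1/(n:ℝ))^2) by
        rw [Real.sqrt_sq (by positivity)]]
      refine Real.sqrt_le_sqrt ?_
      rw [div_pow, one_pow, div_le_div_iff₀ (by positivity) hn']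
      have hlog1 : 1 ≤ Real.log n := by
        rw [Real.le_log_iff_exp_le hn']
        calc Real.exp 1 ≤ 2.7182818286 := Real.exp_one_lt_d9.le
          _ ≤ 3 := by norm_num
          _ ≤ n := by exact_mod_cast hn5
      nlinarith
    have h9 : Real.sqrt 10 ≤ 16 * Real.sqrt 2 := by
      have h512 : Real.sqrt 512 = 16 * Real.sqrt 2 := by
        rw [show (512:ℝ) = 16^2 * 2 by norm_num, Real.sqrt_mul (by positivity),
          Real.sqrt_sq (by norm_num)]
      rw [← h512]
      exact Real.sqrt_le_sqrt (by norm_num)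
    have hbound : Real.sqrt 10 * c * Real.sqrt (Real.log n / n) + c / n + c / n
        ≤ (16 * Real.sqrt 2 + 2) * c * Real.sqrt (Real.log n / n) := by
      have ht1 : Real.sqrt 10 * c * Real.sqrt (Real.log n / n)
          ≤ 16 * Real.sqrt 2 * c * Real.sqrt (Real.log n / n) := by
        have := mul_le_mul_of_nonneg_right (mul_le_mul_of_nonneg_right h9 hc0) hsqL
        linarith
      have ht2 : c / n ≤ c * Real.sqrt (Real.log n / n) := by
        have := mul_le_mul_of_nonneg_left h8 hc0
        calc c / n = c * (1 / n) := by ring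
          _ ≤ c * Real.sqrt (Real.log n / n) := this
      nlinarith [hsqL, hc0]
    -- assemble
    calc |gPlus S V Vmax j (Function.update lam j x) ω - gStar μ S V j (Function.update lam j x)|
        = |(gPlus S V Vmax j (Function.update lam j x) ω - (1/(n:ℝ)) * Ssum)
            + ((1/(n:ℝ)) * Ssum - gStar μ S V j (Function.update lam j x))| := by
          congr 1
          ring
      _ ≤ |gPlus S V Vmax j (Function.update lam j x) ω - (1/(n:ℝ)) * Ssum|
            + |(1/(n:ℝ)) * Ssum - gStar μ S V j (Function.update lam j x)| := abs_add_le _ _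
      _ ≤ c / n + (Real.sqrt 10 * c * Real.sqrt (Real.log n / n) + c / n) := by
          refine add_le_add hdiff ?_
          rw [hgstar]
          exact hEh
      _ ≤ (16 * Real.sqrt 2 + 2) * c * Real.sqrt (Real.log n / n) := by linarith [hbound]


end
end

section
/- (Value of the population risk at its generalized inverse, and 1-Lipschitz dependence on the level.) Fix j ∈ {1,…,m} and suppose the cumulative distribution function of S_j^{(n+1)} is K_j-Lipschitz for some K_j > 0. Then for every λ_{1:(j−1)} ∈ ℝ^{j−1} and every β ∈ ℝ: g_j^*(U_j^*(λ_{1:(j−1)}; β); λ_{1:(j−1)}) = max{ g_j^*(λ_j^max; λ_{1:(j−1)}), min{ g_j^*(λ_j^min; λ_{1:(j−1)}), β } }. Consequently, for all β, β' ∈ ℝ: |g_j^*(U_j^*(λ_{1:(j−1)}; β); λ_{1:(j−1)}) − g_j^*(U_j^*(λ_{1:(j−1)}; β'); λ_{1:(j−1)})| ≤ |β − β'|. -/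
open MeasureTheory Set

attribute [local instance] Classical.propDecidable

noncomputable section

lemma aux_order {g : ℝ → ℝ} (hg : Continuous g) (hanti : Antitone g)
    {a c : ℝ} (hac : a ≤ c) (b : ℝ) :
    g (sSup (insert a {x | x ∈ Set.Icc a c ∧ b < g x})) = max (g c) (min (g a) b) := by
  set T := insert a {x | x ∈ Set.Icc a c ∧ b < g x} with hT
  have hne : T.Nonempty := ⟨a, Set.mem_insert _ _⟩
  have hbdd : BddAbove T := ⟨c, by rintro x (rfl | ⟨hx, _⟩); exacts [hac, hx.2]⟩
  set U := sSup T with hU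
  have haU : a ≤ U := le_csSup hbdd (Set.mem_insert _ _)
  have hUc : U ≤ c := csSup_le hne (by rintro x (rfl | ⟨hx, _⟩); exacts [hac, hx.2])
  have hgca : g c ≤ g a := hanti hac
  rcases lt_or_ge b (g c) with h1 | h1
  · have hcT : c ∈ T := Set.mem_insert_of_mem _ ⟨⟨hac, le_rfl⟩, h1⟩
    have hUeq : U = c := le_antisymm hUc (le_csSup hbdd hcT)
    rw [hUeq, max_eq_left (le_trans (min_le_right _ _) h1.le)]
  rcases le_or_gt (g a) b with h2 | h2
  · have hUeq : U = a := le_antisymm (csSup_le hne (by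
      rintro x (rfl | ⟨hx, hxg⟩)
      · exact le_rfl
      · exact absurd hxg (not_lt.mpr (le_trans (hanti hx.1) h2)))) haU
    rw [hUeq, min_eq_left h2, max_eq_right hgca]
  · have hble : b ≤ g U := by
      by_contra h; push_neg at h
      obtain ⟨δ, hδ, hball⟩ := Metric.continuousAt_iff.mp hg.continuousAt (b - g U) (by linarith)
      obtain ⟨t, htT, htl⟩ := exists_lt_of_lt_csSup hne (show U - δ < U by linarith)
      have htU : t ≤ U := le_csSup hbdd htT
      have hgt : b < g t := by
        rcases htT with rfl | ⟨_, h'⟩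
        · exact h2
        · exact h'
      have hdt := hball (show dist t U < δ by
        rw [Real.dist_eq, abs_lt]; constructor <;> linarith)
      rw [Real.dist_eq, abs_lt] at hdt
      linarith
    have hleb : g U ≤ b := by
      rcases eq_or_lt_of_le hUc with heq | hlt
      · rw [heq]; exact h1
      · by_contra h; push_neg at h
        obtain ⟨δ, hδ, hball⟩ := Metric.continuousAt_iff.mp hg.continuousAt (g U - b) (by linarith)
        set x := min (U + δ/2) c with hx
        have hxU : U < x := lt_min (by linarith) hlt
        have hxc : x ≤ c := min_le_right _ _
        have hdist : dist x U < δ := by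
          rw [Real.dist_eq, abs_lt]
          have hxle : x ≤ U + δ/2 := min_le_left _ _
          constructor <;> linarith
        have hdx := hball hdist
        rw [Real.dist_eq, abs_lt] at hdx
        have hgx : b < g x := by linarith
        have hxT : x ∈ T := Set.mem_insert_of_mem _ ⟨⟨le_trans haU hxU.le, hxc⟩, hgx⟩
        exact absurd (le_csSup hbdd hxT) (not_le.mpr hxU)
    rw [le_antisymm hleb hble, min_eq_right h2.le, max_eq_right h1]

lemma G_props {Ω : Type*} [MeasurableSpace Ω] (μ : Measure Ω) [IsProbabilityMeasure μ]
    (S0 V0 : Ω → ℝ) (hS0 : Measurable S0) (hV0 : Measurable V0)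
    (A : Set Ω) (hA : MeasurableSet A)
    (Vmax : ℝ) (hVmax : 0 ≤ Vmax) (hbd : ∀ᵐ ω ∂μ, V0 ω ∈ Icc 0 Vmax)
    (K : ℝ) (hK0 : 0 ≤ K)
    (hK : ∀ s t : ℝ, |(μ {ω | S0 ω ≤ s}).toReal - (μ {ω | S0 ω ≤ t}).toReal| ≤ K * |s - t|) :
    Antitone (fun x => ∫ ω, V0 ω * (A ∩ {ω' | x < S0 ω'}).indicator (fun _ => (1:ℝ)) ω ∂μ) ∧
    Continuous (fun x => ∫ ω, V0 ω * (A ∩ {ω' | x < S0 ω'}).indicator (fun _ => (1:ℝ)) ω ∂μ) := by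
  have hiff : (fun x => fun ω => V0 ω * (A ∩ {ω' | x < S0 ω'}).indicator (fun _ => (1:ℝ)) ω)
      = fun x => fun ω => V0 ω * (if ω ∈ A ∧ x < S0 ω then 1 else 0) := by
    funext x ω
    congr 1
    rw [Set.indicator_apply]
    exact if_congr (Set.mem_inter_iff _ _ _) rfl rfl
  have hiff2 : (fun x => ∫ ω, V0 ω * (A ∩ {ω' | x < S0 ω'}).indicator (fun _ => (1:ℝ)) ω ∂μ)
      = fun x => ∫ ω, V0 ω * (if ω ∈ A ∧ x < S0 ω then 1 else 0) ∂μ := by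
    funext x
    exact congrArg (fun f => ∫ ω, f ω ∂μ) (congrFun hiff x)
  rw [hiff2]
  set φ : ℝ → Ω → ℝ := fun x ω => V0 ω * (if ω ∈ A ∧ x < S0 ω then 1 else 0) with hφ
  have hmeas : ∀ x, Measurable (φ x) := by
    intro x
    apply hV0.mul
    apply Measurable.ite ?_ measurable_const measurable_const
    exact hA.inter (measurableSet_lt measurable_const hS0)
  have hint : ∀ x, Integrable (φ x) μ := by
    intro x
    refine (integrable_const Vmax).mono' (hmeas x).aestronglyMeasurable ?_
    filter_upwards [hbd] with ω hω
    have h0 : (0:ℝ) ≤ V0 ω := hω.1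
    rw [Real.norm_eq_abs, abs_mul, abs_of_nonneg h0]
    split_ifs with h
    · simpa using hω.2
    · simpa using hVmax
  have hind : ∀ t : ℝ, Integrable (fun ω => if S0 ω ≤ t then (1:ℝ) else 0) μ := by
    intro t
    have heq : (fun ω => if S0 ω ≤ t then (1:ℝ) else 0)
        = Set.indicator {ω | S0 ω ≤ t} (fun _ => 1) := by
      funext ω; simp [Set.indicator_apply]
    rw [heq]
    exact (integrable_const 1).indicator (measurableSet_le hS0 measurable_const)
  have hindval : ∀ t : ℝ, ∫ ω, (if S0 ω ≤ t then (1:ℝ) else 0) ∂μ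
      = (μ {ω | S0 ω ≤ t}).toReal := by
    intro t
    have heq : (fun ω => if S0 ω ≤ t then (1:ℝ) else 0)
        = Set.indicator {ω | S0 ω ≤ t} (fun _ => 1) := by
      funext ω; simp [Set.indicator_apply]
    rw [heq, integral_indicator_const (1:ℝ) (measurableSet_le hS0 measurable_const)]
    simp
    rfl
  have hanti : Antitone (fun x => ∫ ω, φ x ω ∂μ) := by
    intro x y hxy
    refine integral_mono_ae (hint y) (hint x) ?_
    filter_upwards [hbd] with ω hω
    refine mul_le_mul_of_nonneg_left ?_ hω.1
    split_ifs with h h'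
    · exact le_rfl
    · exact absurd ⟨h.1, lt_of_le_of_lt hxy h.2⟩ h'
    · norm_num
    · exact le_rfl
  have hlip : ∀ x y : ℝ, x ≤ y →
      (∫ ω, φ x ω ∂μ) - (∫ ω, φ y ω ∂μ) ≤ Vmax * (K * (y - x)) := by
    intro x y hxy
    have key : ∫ ω, φ x ω - φ y ω ∂μ
        ≤ ∫ ω, Vmax * ((if S0 ω ≤ y then (1:ℝ) else 0) - (if S0 ω ≤ x then (1:ℝ) else 0)) ∂μ := by
      refine integral_mono_ae ((hint x).sub (hint y)) (((hind y).sub (hind x)).const_mul _) ?_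
      filter_upwards [hbd] with ω hω
      simp only [hφ, Pi.sub_apply]
      rw [← mul_sub]
      set e : ℝ := (if ω ∈ A ∧ x < S0 ω then (1:ℝ) else 0) - (if ω ∈ A ∧ y < S0 ω then (1:ℝ) else 0) with he
      set d : ℝ := (if S0 ω ≤ y then (1:ℝ) else 0) - (if S0 ω ≤ x then (1:ℝ) else 0) with hd
      have he0 : 0 ≤ e := by
        rw [he]; split_ifs with h h2 h3
        · norm_num
        · norm_num
        · exact absurd ⟨h3.1, lt_of_le_of_lt hxy h3.2⟩ h
        · norm_num
      have hd0 : 0 ≤ d := by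
        rw [hd]; split_ifs with h h2 h3
        · norm_num
        · norm_num
        · exact absurd (le_trans h3 hxy) h
        · norm_num
      have hed : e ≤ d := by
        by_cases h1 : ω ∈ A ∧ x < S0 ω
        · by_cases h2 : ω ∈ A ∧ y < S0 ω
          · rw [he]; simpa [h1, h2] using hd0
          · have hSy : S0 ω ≤ y := le_of_not_gt fun hc => h2 ⟨h1.1, hc⟩
            have hSx : ¬ S0 ω ≤ x := not_le.mpr h1.2
            have hyS : ¬ y < S0 ω := not_lt.mpr hSy
            rw [he, hd]; simp [h1, hyS, hSy, hSx]
        · have h2 : ¬(ω ∈ A ∧ y < S0 ω) := fun hc => h1 ⟨hc.1, lt_of_le_of_lt hxy hc.2⟩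
          rw [he]; simpa [h1, h2] using hd0
      calc V0 ω * e ≤ Vmax * e := mul_le_mul_of_nonneg_right hω.2 he0
        _ ≤ Vmax * d := mul_le_mul_of_nonneg_left hed hVmax
    have hFy := hK y x
    calc (∫ ω, φ x ω ∂μ) - (∫ ω, φ y ω ∂μ) = ∫ ω, φ x ω - φ y ω ∂μ :=
          (integral_sub (hint x) (hint y)).symm
      _ ≤ ∫ ω, Vmax * ((if S0 ω ≤ y then (1:ℝ) else 0) - (if S0 ω ≤ x then (1:ℝ) else 0)) ∂μ := key
      _ = Vmax * ((μ {ω | S0 ω ≤ y}).toReal - (μ {ω | S0 ω ≤ x}).toReal) := by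
          rw [integral_const_mul, integral_sub (hind y) (hind x), hindval, hindval]
      _ ≤ Vmax * (K * (y - x)) := by
          refine mul_le_mul_of_nonneg_left ?_ hVmax
          have habs : |y - x| = y - x := abs_of_nonneg (sub_nonneg.mpr hxy)
          calc (μ {ω | S0 ω ≤ y}).toReal - (μ {ω | S0 ω ≤ x}).toReal
              ≤ |(μ {ω | S0 ω ≤ y}).toReal - (μ {ω | S0 ω ≤ x}).toReal| := le_abs_self _
            _ ≤ K * |y - x| := hFy
            _ = K * (y - x) := by rw [habs]
  refine ⟨hanti, ?_⟩
  have hlipw : LipschitzWith (Real.toNNReal (Vmax * K)) (fun x => ∫ ω, φ x ω ∂μ) := by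
    apply LipschitzWith.of_dist_le_mul
    intro x y
    rw [Real.dist_eq, Real.dist_eq, Real.coe_toNNReal _ (mul_nonneg hVmax hK0)]
    rcases le_total x y with h | h
    · rw [abs_of_nonneg (sub_nonneg.mpr (hanti h)), abs_of_nonpos (sub_nonpos.mpr h)]
      have := hlip x y h
      nlinarith
    · rw [abs_of_nonpos (sub_nonpos.mpr (hanti h)), abs_of_nonneg (sub_nonneg.mpr h)]
      have := hlip y x h
      nlinarith
  exact hlipw.continuous

/-- Lemma: value of the population risk at its generalized inverse, and
1-Lipschitz dependence on the level.  If the cdf of `S_j^{(n+1)}` is `K_j`-Lipschitz, then for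
every `λ_{1:(j−1)}` and every `β`:
`g_j^*(U_j^*(λ_{1:(j−1)}; β); λ_{1:(j−1)})
  = max{g_j^*(λ_j^max; ·), min{g_j^*(λ_j^min; ·), β}}`,
and consequently `β ↦ g_j^*(U_j^*(λ_{1:(j−1)}; β); λ_{1:(j−1)})` is 1-Lipschitz. -/
theorem population_inverse_value
    {Ω : Type*} [MeasurableSpace Ω] (μ : Measure Ω) [IsProbabilityMeasure μ]
    (m n : ℕ) (hm : 1 ≤ m) (hn : 1 ≤ n)
    (S V : Fin (n + 1) → Fin m → Ω → ℝ)
    (hSmeas : ∀ i j, Measurable (S i j)) (hVmeas : ∀ i j, Measurable (V i j))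
    (lamMin lamMax : Fin m → ℝ) (hΛ : ∀ j, lamMin j ≤ lamMax j)
    (Vmin Vmax : Fin m → ℝ) (hVmin0 : ∀ j, 0 ≤ Vmin j) (hVle : ∀ j, Vmin j ≤ Vmax j)
    (hVbd : ∀ i j, ∀ᵐ ω ∂μ, V i j ω ∈ Icc (Vmin j) (Vmax j))
    (j : Fin m) (K : ℝ) (hKpos : 0 < K)
    (hK : ∀ s t : ℝ,
      |(μ {ω | S (Fin.last n) j ω ≤ s}).toReal - (μ {ω | S (Fin.last n) j ω ≤ t}).toReal|
        ≤ K * |s - t|) :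
    ∀ (lam : Fin m → ℝ),
      (∀ b : ℝ,
        gStar μ S V j (Function.update lam j (UStar μ S V lamMin lamMax j lam b))
          = max (gStar μ S V j (Function.update lam j (lamMax j)))
              (min (gStar μ S V j (Function.update lam j (lamMin j))) b)) ∧
      (∀ b b' : ℝ,
        |gStar μ S V j (Function.update lam j (UStar μ S V lamMin lamMax j lam b))
            - gStar μ S V j (Function.update lam j (UStar μ S V lamMin lamMax j lam b'))|
          ≤ |b - b'|) := by
  intro lam
  have hVmax0 : 0 ≤ Vmax j := (hVmin0 j).trans (hVle j)
  have hbd' : ∀ᵐ ω ∂μ, V (Fin.last n) j ω ∈ Icc 0 (Vmax j) := by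
    filter_upwards [hVbd (Fin.last n) j] with ω hω
    exact ⟨(hVmin0 j).trans hω.1, hω.2⟩
  have hAmeas : MeasurableSet {ω : Ω | ∀ l, l < j → S (Fin.last n) l ω ≤ lam l} := by
    have heq : {ω : Ω | ∀ l, l < j → S (Fin.last n) l ω ≤ lam l}
        = ⋂ l ∈ {l : Fin m | l < j}, {ω : Ω | S (Fin.last n) l ω ≤ lam l} := by
      ext ω; simp
    rw [heq]
    exact MeasurableSet.biInter (Set.to_countable _)
      (fun l _ => measurableSet_le (hSmeas _ l) measurable_const)
  obtain ⟨hanti, hcont⟩ := G_props μ (S (Fin.last n) j) (V (Fin.last n) j)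
    (hSmeas _ j) (hVmeas _ j) {ω : Ω | ∀ l, l < j → S (Fin.last n) l ω ≤ lam l} hAmeas
    (Vmax j) hVmax0 hbd' K hKpos.le hK
  have hgeq : (fun x => gStar μ S V j (Function.update lam j x))
      = fun x => ∫ ω, V (Fin.last n) j ω *
          ({ω : Ω | ∀ l, l < j → S (Fin.last n) l ω ≤ lam l}
              ∩ {ω' | x < S (Fin.last n) j ω'}).indicator (fun _ => (1:ℝ)) ω ∂μ := by
    funext x
    unfold gStar lossFn
    refine integral_congr_ae (Filter.Eventually.of_forall fun ω => ?_)
    dsimp only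
    congr 1
    rw [Set.indicator_apply]
    refine if_congr ?_ rfl rfl
    rw [Set.mem_inter_iff, Set.mem_setOf_eq, Set.mem_setOf_eq]
    constructor
    · rintro ⟨h, h2⟩
      refine ⟨fun l hl => ?_, ?_⟩
      · have := h l hl; rwa [Function.update_of_ne hl.ne] at this
      · rwa [Function.update_self] at h2
    · rintro ⟨h, h2⟩
      exact ⟨fun l hl => by rw [Function.update_of_ne hl.ne]; exact h l hl,
        by rwa [Function.update_self]⟩
  have hanti' : Antitone (fun x => gStar μ S V j (Function.update lam j x)) := by
    rw [hgeq]; exact hanti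
  have hcont' : Continuous (fun x => gStar μ S V j (Function.update lam j x)) := by
    rw [hgeq]; exact hcont
  have key : ∀ b : ℝ,
      gStar μ S V j (Function.update lam j (UStar μ S V lamMin lamMax j lam b))
        = max (gStar μ S V j (Function.update lam j (lamMax j)))
            (min (gStar μ S V j (Function.update lam j (lamMin j))) b) := by
    intro b
    exact aux_order hcont' hanti' (hΛ j) b
  refine ⟨key, fun b b' => ?_⟩
  rw [key b, key b']
  set C := gStar μ S V j (Function.update lam j (lamMax j))
  set D := gStar μ S V j (Function.update lam j (lamMin j))
  calc |max C (min D b) - max C (min D b')|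
      ≤ max |C - C| |min D b - min D b'| := abs_max_sub_max_le_max _ _ _ _
    _ ≤ |min D b - min D b'| := by simp
    _ ≤ max |D - D| |b - b'| := abs_min_sub_min_le_max _ _ _ _
    _ ≤ |b - b'| := by simp

end
end
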